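/- For G(κ) = −4κ²ℓ² + (κ²ℓ²+1)² cosh 2πκ − (κ²ℓ²−1)² cosh 2κ(ℓ₁+π) with ℓ, ℓ₁ > 0, one has G(κ) = −2ℓ₁(2π+ℓ₁)κ² + O(κ⁴) as κ → 0⁺; in particular G(κ) < 0 for all sufficiently small κ > 0. -/
import Mathlib

open Real Filter Asymptotics

lemma cosh_taylor (x : ℝ) (hx : |x| ≤ 1) : |Real.cosh x - 1 - x^2/2| ≤ x^4 := by
  have h1 := Real.exp_bound hx (n := 4) (by norm_num)
  have h2 := Real.exp_bound (x := -x) (by rwa [abs_neg]) (n := 4) (by norm_num)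
  have hs1 : ∑ m ∈ Finset.range 4, x ^ m / m.factorial = 1 + x + x^2/2 + x^3/6 := by
    norm_num [Finset.sum_range_succ, Nat.factorial]
  have hs2 : ∑ m ∈ Finset.range 4, (-x) ^ m / m.factorial = 1 - x + x^2/2 - x^3/6 := by
    norm_num [Finset.sum_range_succ, Nat.factorial]; ring
  rw [hs1] at h1
  rw [hs2, abs_neg] at h2
  have hcosh : Real.cosh x - 1 - x^2/2
      = ((Real.exp x - (1 + x + x^2/2 + x^3/6)) + (Real.exp (-x) - (1 - x + x^2/2 - x^3/6))) / 2 := by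
    rw [Real.cosh_eq]; ring
  rw [hcosh]
  have hx4 : |x|^4 = x^4 := by rw [← abs_pow, abs_of_nonneg (by positivity)]
  rw [hx4] at h1 h2
  have hn : ((Nat.succ 4 : ℕ) : ℝ) / ((Nat.factorial 4 : ℕ) * (4:ℕ)) = 5/96 := by
    norm_num [Nat.factorial]
  rw [hn] at h1 h2
  have h4 : (0:ℝ) ≤ x^4 := by positivity
  have := abs_add_le (Real.exp x - (1 + x + x^2/2 + x^3/6)) (Real.exp (-x) - (1 - x + x^2/2 - x^3/6))
  rw [abs_div, abs_two]
  nlinarith [abs_nonneg (Real.exp x - (1 + x + x^2/2 + x^3/6))]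

set_option maxHeartbeats 2000000 in
theorem G_asymptotics_near_zero
    (ℓ ℓ₁ : ℝ) (hℓ : 0 < ℓ) (hℓ₁ : 0 < ℓ₁)
    (G : ℝ → ℝ)
    (hG : ∀ κ, G κ = -(4 * κ^2 * ℓ^2) + (κ^2 * ℓ^2 + 1)^2 * cosh (2 * π * κ)
        - (κ^2 * ℓ^2 - 1)^2 * cosh (2 * κ * (ℓ₁ + π))) :
    ((fun κ => G κ + 2 * ℓ₁ * (2 * π + ℓ₁) * κ^2)
        =O[nhdsWithin 0 (Set.Ioi 0)] (fun κ => κ^4)) ∧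
    (∃ κ₀ > 0, ∀ κ, 0 < κ → κ < κ₀ → G κ < 0) := by
  have hπ := Real.pi_pos
  set L := ℓ^2 with hL
  have hLpos : 0 < L := by positivity
  set b := 2*(ℓ₁+π) with hb
  have hbpos : 0 < b := by positivity
  have hab : 2*π ≤ b := by nlinarith
  set C := (L^2+2*L)*((2*π)^2+b^2)/2 + (L+1)^2*((2*π)^4+b^4) with hC
  have hCpos : 0 < C := by positivity
  set δ := min 1 (1/b) with hδ
  have hδpos : 0 < δ := lt_min one_pos (by positivity)
  have hδ1 : δ ≤ 1 := min_le_left _ _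
  have hδb : δ ≤ 1/b := min_le_right _ _
  clear_value δ C b L
  have key : ∀ κ : ℝ, |κ| ≤ δ → |G κ + 2*ℓ₁*(2*π+ℓ₁)*κ^2| ≤ C * κ^4 := by
    intro κ hκ
    have hκ1 : |κ| ≤ 1 := le_trans hκ hδ1
    have hκsq : κ^2 ≤ 1 := by
      have := sq_abs κ
      nlinarith [abs_nonneg κ]
    have hκb : |b*κ| ≤ 1 := by
      rw [abs_mul, abs_of_pos hbpos]
      have h2 : |κ| ≤ 1/b := le_trans hκ hδb
      calc b*|κ| ≤ b*(1/b) := by gcongr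
        _ = 1 := by field_simp
    have hκa : |2*π*κ| ≤ 1 := by
      rw [abs_mul] at hκb ⊢
      calc |2*π| * |κ| ≤ |b| * |κ| := by
            have h2b : |2*π| ≤ |b| := by
              rw [abs_of_pos (by positivity), abs_of_pos hbpos]; exact hab
            exact mul_le_mul_of_nonneg_right h2b (abs_nonneg _)
        _ ≤ 1 := hκb
    have hκb' : |2*κ*(ℓ₁+π)| ≤ 1 := by
      rw [show 2*κ*(ℓ₁+π) = b*κ by rw [hb]; ring]; exact hκb
    obtain ⟨Ra, hRadef, hRa⟩ : ∃ Ra, cosh (2*π*κ) = 1 + (2*π*κ)^2/2 + Ra ∧ |Ra| ≤ (2*π*κ)^4 :=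
      ⟨_, by ring, cosh_taylor _ hκa⟩
    obtain ⟨Rb, hRbdef, hRb⟩ : ∃ Rb, cosh (2*κ*(ℓ₁+π)) = 1 + (2*κ*(ℓ₁+π))^2/2 + Rb ∧
        |Rb| ≤ (2*κ*(ℓ₁+π))^4 := ⟨_, by ring, cosh_taylor _ hκb'⟩
    have hRa4 : |Ra| ≤ (2*π)^4 * κ^4 := by
      calc |Ra| ≤ (2*π*κ)^4 := hRa
        _ = (2*π)^4 * κ^4 := by ring
    have hRb4 : |Rb| ≤ b^4 * κ^4 := by
      calc |Rb| ≤ (2*κ*(ℓ₁+π))^4 := hRb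
        _ = b^4 * κ^4 := by rw [hb]; ring
    have hid : G κ + 2*ℓ₁*(2*π+ℓ₁)*κ^2
        = κ^4 * ((κ^2*L^2+2*L)*(2*π)^2/2 - (κ^2*L^2-2*L)*b^2/2)
          + (κ^2*L+1)^2*Ra - (κ^2*L-1)^2*Rb := by
      rw [hG κ, hRadef, hRbdef, hL, hb]; ring
    have hA : κ^2*L^2 ≤ L^2 := by nlinarith [sq_nonneg L]
    have hB : |κ^2*L^2-2*L| ≤ L^2+2*L := by
      rw [abs_le]
      constructor <;> nlinarith [mul_nonneg (sq_nonneg κ) (sq_nonneg L), sq_nonneg L]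
    have hD : |(κ^2*L^2+2*L)*(2*π)^2/2 - (κ^2*L^2-2*L)*b^2/2| ≤ (L^2+2*L)*((2*π)^2+b^2)/2 := by
      have e1 : |(κ^2*L^2+2*L)*(2*π)^2/2| ≤ (L^2+2*L)*(2*π)^2/2 := by
        rw [abs_of_nonneg (by positivity)]
        have h5 : κ^2*L^2+2*L ≤ L^2+2*L := by linarith
        nlinarith [mul_le_mul_of_nonneg_right h5 (show (0:ℝ) ≤ (2*π)^2/2 by positivity)]
      have e2 : |(κ^2*L^2-2*L)*b^2/2| ≤ (L^2+2*L)*b^2/2 := by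
        rw [show (κ^2*L^2-2*L)*b^2/2 = (κ^2*L^2-2*L)*(b^2/2) by ring, abs_mul,
          abs_of_nonneg (show (0:ℝ) ≤ b^2/2 by positivity)]
        nlinarith [mul_le_mul_of_nonneg_right hB (show (0:ℝ) ≤ b^2/2 by positivity)]
      calc |(κ^2*L^2+2*L)*(2*π)^2/2 - (κ^2*L^2-2*L)*b^2/2|
          ≤ |(κ^2*L^2+2*L)*(2*π)^2/2| + |(κ^2*L^2-2*L)*b^2/2| := abs_sub _ _
        _ ≤ (L^2+2*L)*(2*π)^2/2 + (L^2+2*L)*b^2/2 := add_le_add e1 e2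
        _ = (L^2+2*L)*((2*π)^2+b^2)/2 := by ring
    have hsq1 : (κ^2*L+1)^2 ≤ (L+1)^2 := by nlinarith [sq_nonneg κ, mul_nonneg (sq_nonneg κ) hLpos.le]
    have hsq2 : (κ^2*L-1)^2 ≤ (L+1)^2 := by nlinarith [sq_nonneg κ, mul_nonneg (sq_nonneg κ) hLpos.le]
    have h1 : |κ^4 * ((κ^2*L^2+2*L)*(2*π)^2/2 - (κ^2*L^2-2*L)*b^2/2)|
        ≤ κ^4 * ((L^2+2*L)*((2*π)^2+b^2)/2) := by
      rw [abs_mul, abs_of_nonneg (by positivity : (0:ℝ) ≤ κ^4)]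
      exact mul_le_mul_of_nonneg_left hD (by positivity)
    have h2 : |(κ^2*L+1)^2*Ra| ≤ (L+1)^2 * ((2*π)^4 * κ^4) := by
      rw [abs_mul, abs_of_nonneg (sq_nonneg _)]
      exact mul_le_mul hsq1 hRa4 (abs_nonneg _) (by positivity)
    have h3 : |(κ^2*L-1)^2*Rb| ≤ (L+1)^2 * (b^4 * κ^4) := by
      rw [abs_mul, abs_of_nonneg (sq_nonneg _)]
      exact mul_le_mul hsq2 hRb4 (abs_nonneg _) (by positivity)
    calc |G κ + 2*ℓ₁*(2*π+ℓ₁)*κ^2|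
        = |κ^4 * ((κ^2*L^2+2*L)*(2*π)^2/2 - (κ^2*L^2-2*L)*b^2/2)
            + (κ^2*L+1)^2*Ra - (κ^2*L-1)^2*Rb| := by rw [hid]
      _ ≤ |κ^4 * ((κ^2*L^2+2*L)*(2*π)^2/2 - (κ^2*L^2-2*L)*b^2/2) + (κ^2*L+1)^2*Ra|
            + |(κ^2*L-1)^2*Rb| := abs_sub _ _
      _ ≤ |κ^4 * ((κ^2*L^2+2*L)*(2*π)^2/2 - (κ^2*L^2-2*L)*b^2/2)| + |(κ^2*L+1)^2*Ra|
            + |(κ^2*L-1)^2*Rb| := by gcongr; exact abs_add_le _ _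
      _ ≤ κ^4 * ((L^2+2*L)*((2*π)^2+b^2)/2) + (L+1)^2 * ((2*π)^4 * κ^4)
            + (L+1)^2 * (b^4 * κ^4) := by gcongr
      _ = C * κ^4 := by rw [hC]; ring
  constructor
  · rw [isBigO_iff]
    refine ⟨C, ?_⟩
    have hev : ∀ᶠ κ in nhds (0:ℝ), |κ| ≤ δ := by
      have : Metric.closedBall (0:ℝ) δ ∈ nhds (0:ℝ) := Metric.closedBall_mem_nhds 0 hδpos
      filter_upwards [this] with κ hκ
      simpa [Real.dist_eq] using hκ
    apply Filter.Eventually.filter_mono nhdsWithin_le_nhds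
    filter_upwards [hev] with κ hκ
    rw [Real.norm_eq_abs, Real.norm_eq_abs, abs_of_nonneg (by positivity : (0:ℝ) ≤ κ^4)]
    exact key κ hκ
  · set c := 2*ℓ₁*(2*π+ℓ₁) with hc
    have hcpos : 0 < c := by positivity
    refine ⟨min δ (c/(C+1)), lt_min hδpos (div_pos hcpos (by linarith)), ?_⟩
    intro κ hκpos hκlt
    have hκδ : |κ| ≤ δ := by
      rw [abs_of_pos hκpos]
      exact le_of_lt (lt_of_lt_of_le hκlt (min_le_left _ _))
    have h := (abs_le.mp (key κ hκδ)).2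
    have hκ1 : κ ≤ 1 := le_trans (le_of_lt (lt_of_lt_of_le hκlt (min_le_left _ _))) hδ1
    have hκc : κ*(C+1) < c := by
      have := lt_of_lt_of_le hκlt (min_le_right _ _)
      exact (lt_div_iff₀ (by linarith)).mp this
    nlinarith [mul_lt_mul_of_pos_right hκc (mul_pos hκpos hκpos),
      mul_nonneg (mul_nonneg hCpos.le (mul_pos (mul_pos hκpos hκpos) hκpos).le)
        (sub_nonneg.mpr hκ1),
      mul_pos hκpos hκpos, mul_pos (mul_pos hκpos hκpos) hκpos]
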